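/- Let (A,m,Δ,S) be a Hopf algebra with antipode S, and define Φ : A⊗A → A⊗A by Φ(a⊗b) = Σ b⁽¹⁾ ⊗ S(b⁽²⁾)a. Then Φ satisfies the ℓEAS braid equation (Id⊗Φ)∘(Φ⊗Id)∘(Id⊗Φ) = (Φ⊗Id)∘(Id⊗τ)∘(Φ⊗Id). -/

import Mathlib

open TensorProduct

/-- The flip of tensor factors. -/
noncomputable def tauMap (K A : Type*) [CommSemiring K] [AddCommMonoid A] [Module K A] :
    A ⊗[K] A →ₗ[K] A ⊗[K] A :=
  (TensorProduct.comm K A A).toLinearMap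

/-- `f ⊗ Id` viewed on `(A ⊗ A) ⊗ A`. -/
noncomputable def leftT (K A : Type*) [CommSemiring K] [AddCommMonoid A] [Module K A]
    (f : A ⊗[K] A →ₗ[K] A ⊗[K] A) : (A ⊗[K] A) ⊗[K] A →ₗ[K] (A ⊗[K] A) ⊗[K] A :=
  TensorProduct.map f LinearMap.id

/-- `Id ⊗ f` viewed on `(A ⊗ A) ⊗ A` via the associator. -/
noncomputable def rightT (K A : Type*) [CommSemiring K] [AddCommMonoid A] [Module K A]
    (f : A ⊗[K] A →ₗ[K] A ⊗[K] A) : (A ⊗[K] A) ⊗[K] A →ₗ[K] (A ⊗[K] A) ⊗[K] A :=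
  (TensorProduct.assoc K A A A).symm.toLinearMap ∘ₗ
    TensorProduct.map LinearMap.id f ∘ₗ (TensorProduct.assoc K A A A).toLinearMap

/-- The ℓEAS braid equation for a linear map `Φ : A ⊗ A → A ⊗ A`. -/
def IsLEAS (K A : Type*) [CommSemiring K] [AddCommMonoid A] [Module K A]
    (Φ : A ⊗[K] A →ₗ[K] A ⊗[K] A) : Prop :=
  rightT K A Φ ∘ₗ leftT K A Φ ∘ₗ rightT K A Φ =
    leftT K A Φ ∘ₗ rightT K A (tauMap K A) ∘ₗ leftT K A Φ

/-- The ℓEAS map `Φ(a ⊗ b) = Σ b⁽¹⁾ ⊗ S(b⁽²⁾)a` of a Hopf algebra. -/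
noncomputable def PhiHopf (K A : Type*) [Field K] [Ring A] [HopfAlgebra K A] :
    A ⊗[K] A →ₗ[K] A ⊗[K] A :=
  TensorProduct.map LinearMap.id
      (LinearMap.mul' K A ∘ₗ TensorProduct.map (HopfAlgebra.antipode (R := K)) LinearMap.id) ∘ₗ
    (TensorProduct.assoc K A A A).toLinearMap ∘ₗ
    TensorProduct.map (Coalgebra.comul (R := K)) LinearMap.id ∘ₗ
    tauMap K A

set_option synthInstance.maxHeartbeats 1000000
set_option maxHeartbeats 1000000

open Coalgebra HopfAlgebra

noncomputable section LEASAux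

variable (K A : Type*) [Field K] [Ring A] [HopfAlgebra K A]

def Theta : A ⊗[K] A →ₗ[K] A ⊗[K] A :=
  (TensorProduct.comm K A A).toLinearMap ∘ₗ
    TensorProduct.map LinearMap.id (LinearMap.mul' K A) ∘ₗ
    (TensorProduct.assoc K A A A).toLinearMap ∘ₗ
    TensorProduct.map (Coalgebra.comul (R := K)) LinearMap.id

variable {K A}

lemma theta_eq (u y : A) :
    Theta K A (u ⊗ₜ[K] y) = (TensorProduct.comm K A A).toLinearMap
      (TensorProduct.map LinearMap.id (LinearMap.mulRight K y) (Coalgebra.comul (R := K) u)) := by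
  simp only [Theta, LinearMap.comp_apply, TensorProduct.map_tmul, LinearMap.id_coe, id_eq]
  generalize Coalgebra.comul (R := K) u = t
  induction t using TensorProduct.induction_on with
  | zero => simp only [zero_tmul, _root_.map_zero]
  | tmul l r => simp [LinearMap.mul'_apply]
  | add s t hs ht => simp only [add_tmul, _root_.map_add, hs, ht]

lemma theta_tmul (u : A) (r : Coalgebra.Repr K u (A × A)) (y : A) :
    Theta K A (u ⊗ₜ[K] y) = ∑ i ∈ r.index, (r.right i * y) ⊗ₜ[K] r.left i := by
  rw [theta_eq, ← r.eq]
  simp [map_sum]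


lemma phi_tmul (x y : A) (r : Coalgebra.Repr K y (A × A)) :
    PhiHopf K A (x ⊗ₜ[K] y) =
      ∑ j ∈ r.index, r.left j ⊗ₜ[K] (HopfAlgebra.antipode (R := K) (r.right j) * x) := by
  simp only [PhiHopf, tauMap, LinearMap.comp_apply, LinearEquiv.coe_coe, TensorProduct.comm_tmul,
    TensorProduct.map_tmul, LinearMap.id_coe, id_eq]
  rw [← r.eq]
  simp [sum_tmul, map_sum, LinearMap.mul'_apply]

lemma sum_counit_smul (y : A) (r : Coalgebra.Repr K y (A × A)) :
    ∑ i ∈ r.index, Coalgebra.counit (R := K) (r.right i) • r.left i = y := by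
  have h := congrArg (TensorProduct.rid K A) (Coalgebra.sum_tmul_counit_eq r)
  simp only [map_sum, TensorProduct.rid_tmul, one_smul] at h
  exact h

lemma theta_phi (x y : A) : Theta K A (PhiHopf K A (x ⊗ₜ[K] y)) = x ⊗ₜ[K] y := by
  set r := ℛ K y with hr
  rw [phi_tmul x y r, map_sum,
    Finset.sum_congr rfl (fun j _ => theta_tmul (r.left j) (ℛ K (r.left j)) _)]
  set H : A ⊗[K] (A ⊗[K] A) →ₗ[K] A ⊗[K] A :=
    (TensorProduct.map (LinearMap.mulRight K x ∘ₗ LinearMap.mul' K A ∘ₗ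
        TensorProduct.map LinearMap.id (HopfAlgebra.antipode (R := K))) LinearMap.id) ∘ₗ
      (TensorProduct.comm K A (A ⊗[K] A)).toLinearMap with hH
  have key := congrArg H
    (Coalgebra.sum_tmul_tmul_eq r (fun i => ℛ K (r.left i)) (fun i => ℛ K (r.right i)))
  simp only [hH, map_sum, LinearMap.comp_apply, LinearEquiv.coe_coe, TensorProduct.comm_tmul,
    TensorProduct.map_tmul, LinearMap.mul'_apply, LinearMap.mulRight_apply, LinearMap.id_coe,
    id_eq] at key
  simp only [← mul_assoc]
  rw [key]
  have inner : ∀ j ∈ r.index,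
      ∑ m ∈ (ℛ K (r.right j)).index,
        ((ℛ K (r.right j)).left m * HopfAlgebra.antipode (R := K) ((ℛ K (r.right j)).right m) * x)
          ⊗ₜ[K] r.left j
      = x ⊗ₜ[K] (Coalgebra.counit (R := K) (r.right j) • r.left j) := by
    intro j _
    rw [← TensorProduct.sum_tmul, ← Finset.sum_mul,
      HopfAlgebra.sum_mul_antipode_eq_smul (ℛ K (r.right j)), smul_mul_assoc, one_mul,
      TensorProduct.smul_tmul]
  rw [Finset.sum_congr rfl inner, ← TensorProduct.tmul_sum, sum_counit_smul y r]

lemma phi_theta (x y : A) : PhiHopf K A (Theta K A (x ⊗ₜ[K] y)) = x ⊗ₜ[K] y := by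
  set r := ℛ K x with hr
  rw [theta_tmul x r y, map_sum,
    Finset.sum_congr rfl (fun i _ => phi_tmul _ (r.left i) (ℛ K (r.left i)))]
  set H : A ⊗[K] (A ⊗[K] A) →ₗ[K] A ⊗[K] A :=
    TensorProduct.map LinearMap.id (LinearMap.mulRight K y ∘ₗ LinearMap.mul' K A ∘ₗ
      TensorProduct.map (HopfAlgebra.antipode (R := K)) LinearMap.id) with hH
  have key := congrArg H
    (Coalgebra.sum_tmul_tmul_eq r (fun i => ℛ K (r.left i)) (fun i => ℛ K (r.right i)))
  simp only [hH, map_sum, TensorProduct.map_tmul, LinearMap.comp_apply,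
    LinearMap.mul'_apply, LinearMap.mulRight_apply, LinearMap.id_coe, id_eq] at key
  simp only [← mul_assoc]
  rw [key]
  have inner : ∀ i ∈ r.index,
      ∑ m ∈ (ℛ K (r.right i)).index,
        r.left i ⊗ₜ[K]
          (HopfAlgebra.antipode (R := K) ((ℛ K (r.right i)).left m) * (ℛ K (r.right i)).right m * y)
      = (Coalgebra.counit (R := K) (r.right i) • r.left i) ⊗ₜ[K] y := by
    intro i _
    rw [← TensorProduct.tmul_sum, ← Finset.sum_mul,
      HopfAlgebra.sum_antipode_mul_eq_smul (ℛ K (r.right i)), smul_mul_assoc, one_mul,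
      ← TensorProduct.smul_tmul]
  rw [Finset.sum_congr rfl inner, ← TensorProduct.sum_tmul, sum_counit_smul x r]

lemma theta_braid :
    rightT K A (Theta K A) ∘ₗ leftT K A (Theta K A) ∘ₗ rightT K A (Theta K A) =
      leftT K A (Theta K A) ∘ₗ rightT K A (tauMap K A) ∘ₗ leftT K A (Theta K A) := by
  apply TensorProduct.ext_threefold
  intro a b c
  set ra := ℛ K a with hra
  set rb := ℛ K b with hrb
  set G : _ → (A ⊗[K] (A ⊗[K] A)) →ₗ[K] (A ⊗[K] A) ⊗[K] A := fun j =>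
    (TensorProduct.map
      ((TensorProduct.map (LinearMap.mulRight K (rb.right j * c))
          (LinearMap.mulRight K (rb.left j))) ∘ₗ (TensorProduct.comm K A A).toLinearMap)
      LinearMap.id) ∘ₗ (TensorProduct.comm K A (A ⊗[K] A)).toLinearMap with hG
  have hGapp : ∀ j (x y z : A),
      G j (x ⊗ₜ[K] (y ⊗ₜ[K] z)) = ((z * rb.right j * c) ⊗ₜ[K] (y * rb.left j)) ⊗ₜ[K] x := by
    intro j x y z
    simp [hG]
  have hL : (rightT K A (Theta K A) ∘ₗ leftT K A (Theta K A) ∘ₗ rightT K A (Theta K A))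
      ((a ⊗ₜ[K] b) ⊗ₜ[K] c) =
      ∑ j ∈ rb.index, ∑ i ∈ ra.index, ∑ k ∈ (ℛ K (ra.left i)).index,
        ((ra.right i * (rb.right j * c)) ⊗ₜ[K] ((ℛ K (ra.left i)).right k * rb.left j)) ⊗ₜ[K]
          (ℛ K (ra.left i)).left k := by
    simp only [LinearMap.comp_apply, rightT, leftT, LinearEquiv.coe_coe,
      TensorProduct.assoc_tmul, TensorProduct.map_tmul, LinearMap.id_coe, id_eq,
      theta_tmul b rb c, TensorProduct.tmul_sum, map_sum, TensorProduct.assoc_symm_tmul,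
      theta_tmul a ra, TensorProduct.sum_tmul]
    refine Finset.sum_congr rfl fun j _ => Finset.sum_congr rfl fun i _ => ?_
    simp only [theta_tmul (ra.left i) (ℛ K (ra.left i)), TensorProduct.tmul_sum, map_sum,
      TensorProduct.assoc_symm_tmul]
  have hR : (leftT K A (Theta K A) ∘ₗ rightT K A (tauMap K A) ∘ₗ leftT K A (Theta K A))
      ((a ⊗ₜ[K] b) ⊗ₜ[K] c) =
      ∑ i ∈ ra.index, ∑ m ∈ (ℛ K (ra.right i)).index, ∑ j ∈ rb.index,
        (((ℛ K (ra.right i)).right m * rb.right j * c) ⊗ₜ[K]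
          ((ℛ K (ra.right i)).left m * rb.left j)) ⊗ₜ[K] ra.left i := by
    simp only [LinearMap.comp_apply, rightT, leftT, LinearEquiv.coe_coe, tauMap,
      TensorProduct.assoc_tmul, TensorProduct.map_tmul, LinearMap.id_coe, id_eq,
      theta_tmul a ra, TensorProduct.sum_tmul, map_sum, TensorProduct.comm_tmul,
      TensorProduct.assoc_symm_tmul]
    refine Finset.sum_congr rfl fun i _ => ?_
    rw [theta_eq]
    rw [Bialgebra.comul_mul, ← (ℛ K (ra.right i)).eq, ← rb.eq, Finset.sum_mul_sum]
    simp only [Algebra.TensorProduct.tmul_mul_tmul, map_sum, TensorProduct.map_tmul,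
      TensorProduct.sum_tmul, LinearMap.id_coe, id_eq, LinearMap.mulRight_apply,
      TensorProduct.comm_tmul, LinearEquiv.coe_coe]
  rw [hL, hR]
  have key := Coalgebra.sum_tmul_tmul_eq ra (fun i => ℛ K (ra.left i)) (fun i => ℛ K (ra.right i))
  calc ∑ j ∈ rb.index, ∑ i ∈ ra.index, ∑ k ∈ (ℛ K (ra.left i)).index,
        ((ra.right i * (rb.right j * c)) ⊗ₜ[K] ((ℛ K (ra.left i)).right k * rb.left j)) ⊗ₜ[K]
          (ℛ K (ra.left i)).left k
      = ∑ j ∈ rb.index, G j (∑ i ∈ ra.index, ∑ k ∈ (ℛ K (ra.left i)).index,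
          (ℛ K (ra.left i)).left k ⊗ₜ[K] ((ℛ K (ra.left i)).right k ⊗ₜ[K] ra.right i)) := by
        refine Finset.sum_congr rfl fun j _ => ?_
        simp only [map_sum, hGapp, mul_assoc]
    _ = ∑ j ∈ rb.index, G j (∑ i ∈ ra.index, ∑ m ∈ (ℛ K (ra.right i)).index,
          ra.left i ⊗ₜ[K] ((ℛ K (ra.right i)).left m ⊗ₜ[K] (ℛ K (ra.right i)).right m)) := by
        rw [key]
    _ = ∑ i ∈ ra.index, ∑ m ∈ (ℛ K (ra.right i)).index, ∑ j ∈ rb.index,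
        (((ℛ K (ra.right i)).right m * rb.right j * c) ⊗ₜ[K]
          ((ℛ K (ra.right i)).left m * rb.left j)) ⊗ₜ[K] ra.left i := by
        simp only [map_sum, hGapp]
        rw [Finset.sum_comm]
        refine Finset.sum_congr rfl fun i _ => ?_
        rw [Finset.sum_comm]

lemma leftT_cancel {f g : A ⊗[K] A →ₗ[K] A ⊗[K] A} (h : f ∘ₗ g = LinearMap.id)
    (t : (A ⊗[K] A) ⊗[K] A) : leftT K A f (leftT K A g t) = t := by
  have : leftT K A f ∘ₗ leftT K A g = LinearMap.id := by
    unfold leftT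
    rw [← TensorProduct.map_comp, h, LinearMap.id_comp, TensorProduct.map_id]
  simpa using LinearMap.congr_fun this t

lemma rightT_cancel {f g : A ⊗[K] A →ₗ[K] A ⊗[K] A} (h : f ∘ₗ g = LinearMap.id)
    (t : (A ⊗[K] A) ⊗[K] A) : rightT K A f (rightT K A g t) = t := by
  have : rightT K A f ∘ₗ rightT K A g = LinearMap.id := by
    apply TensorProduct.ext_threefold
    intro x y z
    have := LinearMap.congr_fun h (y ⊗ₜ[K] z)
    simp only [LinearMap.comp_apply, LinearMap.id_apply] at this
    simp [rightT, this]
  simpa using LinearMap.congr_fun this t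

lemma theta_phi_comp : Theta K A ∘ₗ PhiHopf K A = LinearMap.id :=
  TensorProduct.ext' fun x y => by simpa using theta_phi x y

lemma phi_theta_comp : PhiHopf K A ∘ₗ Theta K A = LinearMap.id :=
  TensorProduct.ext' fun x y => by simpa using phi_theta x y

lemma tau_tau_comp : tauMap K A ∘ₗ tauMap K A = LinearMap.id :=
  TensorProduct.ext' fun x y => by simp [tauMap]

theorem stmt14' :
    rightT K A (PhiHopf K A) ∘ₗ leftT K A (PhiHopf K A) ∘ₗ rightT K A (PhiHopf K A) =
      leftT K A (PhiHopf K A) ∘ₗ rightT K A (tauMap K A) ∘ₗ leftT K A (PhiHopf K A) := by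
  have e1 : ∀ s, rightT K A (Theta K A) (rightT K A (PhiHopf K A) s) = s :=
    rightT_cancel theta_phi_comp
  have e2 : ∀ s, leftT K A (Theta K A) (leftT K A (PhiHopf K A) s) = s :=
    leftT_cancel theta_phi_comp
  have e3 : ∀ s, leftT K A (PhiHopf K A) (leftT K A (Theta K A) s) = s :=
    leftT_cancel phi_theta_comp
  have e4 : ∀ s, rightT K A (tauMap K A) (rightT K A (tauMap K A) s) = s :=
    rightT_cancel tau_tau_comp
  have hEpt : ∀ s, rightT K A (Theta K A) (leftT K A (Theta K A) (rightT K A (Theta K A) s)) =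
      leftT K A (Theta K A) (rightT K A (tauMap K A) (leftT K A (Theta K A) s)) := fun s => by
    simpa using LinearMap.congr_fun (theta_braid (K := K) (A := A)) s
  apply LinearMap.ext
  intro t
  simp only [LinearMap.comp_apply]
  calc rightT K A (PhiHopf K A) (leftT K A (PhiHopf K A) (rightT K A (PhiHopf K A) t))
      = leftT K A (PhiHopf K A) (rightT K A (tauMap K A) (leftT K A (PhiHopf K A)
          (leftT K A (Theta K A) (rightT K A (tauMap K A) (leftT K A (Theta K A)
            (rightT K A (PhiHopf K A) (leftT K A (PhiHopf K A)
              (rightT K A (PhiHopf K A) t)))))))) := by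
        rw [e3, e4, e3]
    _ = leftT K A (PhiHopf K A) (rightT K A (tauMap K A) (leftT K A (PhiHopf K A)
          (rightT K A (Theta K A) (leftT K A (Theta K A) (rightT K A (Theta K A)
            (rightT K A (PhiHopf K A) (leftT K A (PhiHopf K A)
              (rightT K A (PhiHopf K A) t)))))))) := by
        rw [hEpt]
    _ = leftT K A (PhiHopf K A) (rightT K A (tauMap K A) (leftT K A (PhiHopf K A) t)) := by
        rw [e1, e2, e1]

end LEASAux

theorem stmt14 {K A : Type*} [Field K] [Ring A] [HopfAlgebra K A] :
    IsLEAS K A (PhiHopf K A) := stmt14'
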